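/- Let S be a 2n×2n complex matrix, P an r×r complex matrix, Q a 2n×r complex matrix, and L the block upper triangular matrix [[S, Q],[0, P]]. Suppose there exist μ ∈ ℂ and a nonzero vector v ∈ ℂ^r such that P·v = μ·v and Q·v does not lie in the range of S − μI (a 'coupled passing'). Then L is not diagonalizable, i.e. ℂ^{2n+r} does not admit a basis of eigenvectors of L (L has a nondiagonal block in its Jordan canonical form). -/

import Mathlib

open Matrix

open Polynomial

lemma aeval_mulVec_eig {m : Type*} [Fintype m] [DecidableEq m]
    (M : Matrix m m ℂ) (μ : ℂ) (u : m → ℂ) (h : M.mulVec u = μ • u) (p : ℂ[X]) :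
    (aeval M p).mulVec u = p.eval μ • u := by
  induction p using Polynomial.induction_on with
  | C a =>
      simp [Matrix.smul_mulVec, Matrix.one_mulVec, Algebra.algebraMap_eq_smul_one]
  | add p q hp hq =>
      simp [Matrix.add_mulVec, hp, hq, add_smul]
  | monomial k a ih =>
      have e : (C a * X ^ (k + 1)) = (C a * X ^ k) * X := by ring
      rw [e, _root_.map_mul, aeval_X, ← Matrix.mulVec_mulVec, h]
      rw [Matrix.mulVec_smul] at *
      rw [ih]
      simp [smul_smul]
      ring_nf

lemma aeval_fromBlocks_tri {m r : Type*} [Fintype m] [Fintype r] [DecidableEq m] [DecidableEq r]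
    (S : Matrix m m ℂ) (P : Matrix r r ℂ) (Q : Matrix m r ℂ) (p : ℂ[X]) :
    ∃ Q' : Matrix m r ℂ,
      aeval (fromBlocks S Q 0 P) p = fromBlocks (aeval S p) Q' 0 (aeval P p) := by
  induction p using Polynomial.induction_on with
  | C a =>
      refine ⟨0, ?_⟩
      simp only [aeval_C, Algebra.algebraMap_eq_smul_one]
      rw [← Matrix.fromBlocks_one (l := m) (m := r), Matrix.fromBlocks_smul]
      simp
  | add p q hp hq =>
      obtain ⟨Q1, h1⟩ := hp
      obtain ⟨Q2, h2⟩ := hq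
      refine ⟨Q1 + Q2, ?_⟩
      simp [h1, h2, Matrix.fromBlocks_add]
  | monomial k a ih =>
      obtain ⟨Q1, h1⟩ := ih
      refine ⟨aeval S (C a * X ^ k) * Q + Q1 * P, ?_⟩
      have e : (C a * X ^ (k + 1)) = (C a * X ^ k) * X := by ring
      rw [e, _root_.map_mul, _root_.map_mul (aeval S), _root_.map_mul (aeval P),
        aeval_X, aeval_X, aeval_X, h1, Matrix.fromBlocks_multiply]
      simp


/-- A coupled passing forces a nontrivial Jordan block: if `v ≠ 0` is an eigenvector of `P`
with eigenvalue `μ` and `Q·v` is not in the range of `S − μI`, then the block upper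
triangular matrix `L = [[S, Q], [0, P]]` is not diagonalizable, i.e. there is no basis of
`ℂ^{2n+r}` consisting of eigenvectors of `L`. -/
theorem stmt_2 (n r : ℕ)
    (S : Matrix (Fin (2 * n)) (Fin (2 * n)) ℂ) (P : Matrix (Fin r) (Fin r) ℂ)
    (Q : Matrix (Fin (2 * n)) (Fin r) ℂ)
    (L : Matrix (Fin (2 * n) ⊕ Fin r) (Fin (2 * n) ⊕ Fin r) ℂ)
    (hL : L = Matrix.fromBlocks S Q 0 P)
    (mu : ℂ) (v : Fin r → ℂ) (hv : v ≠ 0) (hPv : P.mulVec v = mu • v)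
    (hQv : ¬∃ w : Fin (2 * n) → ℂ, S.mulVec w - mu • w = Q.mulVec v) :
    ¬∃ (b : Module.Basis (Fin (2 * n) ⊕ Fin r) ℂ ((Fin (2 * n) ⊕ Fin r) → ℂ))
        (c : (Fin (2 * n) ⊕ Fin r) → ℂ),
        ∀ s, L.mulVec (b s) = c s • b s := by
  rintro ⟨b, c, hb⟩
  classical
  apply hQv
  set E : Finset ℂ := (Finset.univ.image c).erase mu with hE
  set h : ℂ[X] := ∏ lam ∈ E, (X - C lam) with hh
  have hhmu : h.eval mu ≠ 0 := by
    rw [hh, eval_prod]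
    refine Finset.prod_ne_zero_iff.mpr ?_
    intro lam hlam
    have hne := Finset.ne_of_mem_erase hlam
    simp only [eval_sub, eval_X, eval_C]
    exact sub_ne_zero.mpr (Ne.symm hne)
  set q : ℂ[X] := (X - C mu) * h with hq
  have hqc : ∀ s, q.eval (c s) = 0 := by
    intro s
    by_cases hcs : c s = mu
    · simp [hq, hcs]
    · have hmem : c s ∈ E := Finset.mem_erase.mpr
        ⟨hcs, Finset.mem_image_of_mem c (Finset.mem_univ s)⟩
      rw [hq, eval_mul, hh, eval_prod, Finset.prod_eq_zero hmem (by simp), mul_zero]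
  set x : (Fin (2 * n) ⊕ Fin r) → ℂ := Sum.elim 0 v with hx
  -- q(L) x = 0
  have hqL : (aeval L q).mulVec x = 0 := by
    have hxr : x = ∑ s, b.repr x s • b s := (b.sum_repr x).symm
    conv_lhs => rw [hxr, ← Matrix.mulVecLin_apply, map_sum]
    refine Finset.sum_eq_zero ?_
    intro s _
    rw [_root_.map_smul, Matrix.mulVecLin_apply, aeval_mulVec_eig L (c s) (b s) (hb s) q,
      hqc s, zero_smul, smul_zero]
  -- divided difference for h at mu
  obtain ⟨p, hp⟩ : (X - C mu) ∣ (h - C (h.eval mu)) := X_sub_C_dvd_sub_C_eval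
  have hph : h = C (h.eval mu) + (X - C mu) * p := by
    rw [← hp]; ring
  -- block form of aeval L p
  obtain ⟨Qp, hQp⟩ := aeval_fromBlocks_tri S P Q p
  rw [← hL] at hQp
  set z1 : Fin (2 * n) → ℂ := Qp.mulVec v with hz1
  have hz : (aeval L p).mulVec x = Sum.elim z1 (p.eval mu • v) := by
    rw [hQp, hx, Matrix.fromBlocks_mulVec]
    simp [aeval_mulVec_eig P mu v hPv p, hz1]
  set y1 : Fin (2 * n) → ℂ := S.mulVec z1 - mu • z1 + p.eval mu • Q.mulVec v with hy1
  have hy : (aeval L h).mulVec x = Sum.elim y1 (h.eval mu • v) := by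
    conv_lhs => rw [hph]
    simp only [map_add, _root_.map_mul, map_sub, aeval_X, aeval_C,
      Algebra.algebraMap_eq_smul_one, Matrix.add_mulVec, Matrix.sub_mulVec,
      Matrix.smul_mulVec, Matrix.one_mulVec, ← Matrix.mulVec_mulVec, hz]
    rw [hL, Matrix.fromBlocks_mulVec]
    funext i
    cases i with
    | inl i =>
        simp [hy1, hx, Matrix.mulVec_smul]
        ring
    | inr j =>
        simp [hx, Matrix.mulVec_smul, hPv, smul_smul]
        ring
  -- unravel q(L) x = 0
  rw [hq, _root_.map_mul, map_sub, aeval_X, aeval_C, ← Matrix.mulVec_mulVec, hy,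
    Matrix.sub_mulVec, Algebra.algebraMap_eq_smul_one, Matrix.smul_mulVec,
    Matrix.one_mulVec, hL, Matrix.fromBlocks_mulVec] at hqL
  refine ⟨(-(h.eval mu))⁻¹ • y1, ?_⟩
  have key : S.mulVec y1 - mu • y1 = (-(h.eval mu)) • Q.mulVec v := by
    funext i
    have hi := congrFun hqL (Sum.inl i)
    simp [Matrix.mulVec_smul] at hi
    simp only [Pi.sub_apply, Pi.smul_apply, neg_smul, smul_eq_mul, Pi.neg_apply]
    linear_combination hi
  rw [Matrix.mulVec_smul, smul_comm, ← smul_sub, key, smul_smul,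
    inv_mul_cancel₀ (by simpa using hhmu), one_smul]
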